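/- Let Ω ⊆ ℝⁿ, K : Ω × Ω × (0,∞) → ℝ measurable, and suppose there exist constants C, λ, ϱ, r > 0 with: (i) |K(x,y,t)| ≤ C (max(|x−y|, √t))^{-2} for 0 < t < (2r)², and (ii) |K(x,y,t)| ≤ C r^{-2} e^{-λϱ^{-2}(t − 2r²)} for t ≥ 2r². Fix x, y ∈ Ω with 0 < |x−y| ≤ r. Then ∫₀^∞ |K(x,y,t)| dt ≤ C' (1 + ϱ²r^{-2} + log(r/|x−y|)) for a constant C' depending only on C and λ. -/

import Mathlib

open MeasureTheory

/-- Near-diagonal logarithmic bound: if `|K(x,y,t)| ≤ C (max(|x-y|,√t))^{-2}` for small times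
and `|K(x,y,t)| ≤ C r^{-2} e^{-λϱ^{-2}(t-2r²)}` for `t ≥ 2r²`, then for `0 < |x-y| ≤ r`,
`∫₀^∞ |K(x,y,t)| dt ≤ C' (1 + ϱ²r^{-2} + log(r/|x-y|))` with `C'` depending only on `C, λ`. -/
theorem stmt_11 :
    ∀ C lam : ℝ, 0 < C → 0 < lam → ∃ C' : ℝ, 0 < C' ∧
      ∀ (n : ℕ) (Ω : Set (EuclideanSpace ℝ (Fin n)))
        (K : EuclideanSpace ℝ (Fin n) → EuclideanSpace ℝ (Fin n) → ℝ → ℝ)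
        (ϱ r : ℝ), 0 < ϱ → 0 < r →
      ∀ x ∈ Ω, ∀ y ∈ Ω, 0 < dist x y → dist x y ≤ r →
      (∀ t : ℝ, 0 < t → t < (2 * r) ^ 2 →
        |K x y t| ≤ C / (max (dist x y) (Real.sqrt t)) ^ 2) →
      (∀ t : ℝ, 2 * r ^ 2 ≤ t →
        |K x y t| ≤ C / r ^ 2 * Real.exp (-(lam / ϱ ^ 2) * (t - 2 * r ^ 2))) →
      (∫⁻ t in Set.Ioi (0 : ℝ), ENNReal.ofReal |K x y t|) ≤
        ENNReal.ofReal (C' * (1 + ϱ ^ 2 / r ^ 2 + Real.log (r / dist x y))) := by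
  intro C lam hC hlam
  refine ⟨2 * C + C * Real.log 2 + C / lam, by positivity, ?_⟩
  intro n Ω K ϱ r hϱ hr x hx y hy hd hdr h1 h2
  set d := dist x y with hd_def
  have hd2 : (0:ℝ) < d ^ 2 := by positivity
  have h2r2 : (0:ℝ) < 2 * r ^ 2 := by positivity
  have hdr2 : d ^ 2 ≤ 2 * r ^ 2 := by nlinarith
  have h4r2 : 2 * r ^ 2 < (2 * r) ^ 2 := by nlinarith
  -- Piece 1 : (0, d²]
  have P1 : (∫⁻ t in Set.Ioc 0 (d ^ 2), ENNReal.ofReal |K x y t|) ≤ ENNReal.ofReal C := by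
    have step : (∫⁻ t in Set.Ioc 0 (d ^ 2), ENNReal.ofReal |K x y t|)
        ≤ ∫⁻ _ in Set.Ioc 0 (d ^ 2), ENNReal.ofReal (C / d ^ 2) := by
      apply setLIntegral_mono measurable_const
      intro t ht
      apply ENNReal.ofReal_le_ofReal
      refine (h1 t ht.1 (lt_of_le_of_lt (ht.2.trans hdr2) h4r2)).trans ?_
      have hmax : d ^ 2 ≤ (max d (Real.sqrt t)) ^ 2 := by
        gcongr
        exact le_max_left _ _
      exact div_le_div_of_nonneg_left hC.le hd2 hmax
    refine step.trans ?_
    rw [setLIntegral_const, Real.volume_Ioc, sub_zero,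
      ← ENNReal.ofReal_mul (by positivity)]
    apply ENNReal.ofReal_le_ofReal
    rw [div_mul_cancel₀ _ hd2.ne']
  -- Piece 2 : (d², 2r²]
  have P2 : (∫⁻ t in Set.Ioc (d ^ 2) (2 * r ^ 2), ENNReal.ofReal |K x y t|)
      ≤ ENNReal.ofReal (C * Real.log (2 * r ^ 2 / d ^ 2)) := by
    have step : (∫⁻ t in Set.Ioc (d ^ 2) (2 * r ^ 2), ENNReal.ofReal |K x y t|)
        ≤ ∫⁻ t in Set.Ioc (d ^ 2) (2 * r ^ 2), ENNReal.ofReal (C / t) := by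
      apply setLIntegral_mono ((measurable_const.div measurable_id).ennreal_ofReal)
      intro t ht
      apply ENNReal.ofReal_le_ofReal
      have ht0 : (0:ℝ) < t := hd2.trans ht.1
      refine (h1 t ht0 (lt_of_le_of_lt ht.2 h4r2)).trans ?_
      have hmax : t ≤ (max d (Real.sqrt t)) ^ 2 := by
        calc t = (Real.sqrt t) ^ 2 := (Real.sq_sqrt ht0.le).symm
          _ ≤ (max d (Real.sqrt t)) ^ 2 := by
              gcongr
              exact le_max_right _ _
      exact div_le_div_of_nonneg_left hC.le ht0 hmax
    refine step.trans ?_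
    have hcont : ContinuousOn (fun t : ℝ => C / t) (Set.Icc (d ^ 2) (2 * r ^ 2)) :=
      continuousOn_const.div continuousOn_id (fun t ht => (hd2.trans_le ht.1).ne')
    have hint : IntegrableOn (fun t : ℝ => C / t) (Set.Ioc (d ^ 2) (2 * r ^ 2)) :=
      (hcont.integrableOn_Icc).mono_set Set.Ioc_subset_Icc_self
    have hnn : (0 : ℝ → ℝ) ≤ᵐ[volume.restrict (Set.Ioc (d ^ 2) (2 * r ^ 2))]
        fun t : ℝ => C / t := by
      filter_upwards [ae_restrict_mem measurableSet_Ioc] with t ht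
      exact div_nonneg hC.le (hd2.trans ht.1).le
    rw [← ofReal_integral_eq_lintegral_ofReal hint hnn]
    apply ENNReal.ofReal_le_ofReal
    rw [← intervalIntegral.integral_of_le hdr2]
    have h0 : (0:ℝ) ∉ Set.uIcc (d ^ 2) (2 * r ^ 2) := by
      rw [Set.uIcc_of_le hdr2]
      intro h
      exact absurd h.1 (not_le.mpr hd2)
    have : (fun t : ℝ => C / t) = fun t : ℝ => C * (1 / t) := by
      funext t; ring
    rw [this, intervalIntegral.integral_const_mul, integral_one_div h0]
  -- Piece 3 : (2r², ∞)
  have P3 : (∫⁻ t in Set.Ioi (2 * r ^ 2), ENNReal.ofReal |K x y t|)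
      ≤ ENNReal.ofReal (C / r ^ 2 * (ϱ ^ 2 / lam)) := by
    set b := lam / ϱ ^ 2 with hb_def
    have hb : 0 < b := by positivity
    set g : ℝ → ℝ := fun t => C / r ^ 2 * Real.exp (-b * (t - 2 * r ^ 2)) with hg_def
    have step : (∫⁻ t in Set.Ioi (2 * r ^ 2), ENNReal.ofReal |K x y t|)
        ≤ ∫⁻ t in Set.Ioi (2 * r ^ 2), ENNReal.ofReal (g t) := by
      apply setLIntegral_mono
      · exact ((Continuous.measurable (by continuity)).ennreal_ofReal)
      · intro t ht
        exact ENNReal.ofReal_le_ofReal (h2 t (le_of_lt ht))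
    refine step.trans ?_
    have hrw : g = fun t : ℝ => (C / r ^ 2 * Real.exp (b * (2 * r ^ 2))) * Real.exp (-b * t) := by
      funext t
      rw [hg_def]
      simp only
      rw [mul_assoc, ← Real.exp_add]
      ring_nf
    have hint : IntegrableOn g (Set.Ioi (2 * r ^ 2)) := by
      rw [hrw]
      exact (exp_neg_integrableOn_Ioi (2 * r ^ 2) hb).const_mul _
    have hnn : (0 : ℝ → ℝ) ≤ᵐ[volume.restrict (Set.Ioi (2 * r ^ 2))] g := by
      filter_upwards with t
      exact mul_nonneg (by positivity) (Real.exp_nonneg _)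
    rw [← ofReal_integral_eq_lintegral_ofReal hint hnn]
    apply ENNReal.ofReal_le_ofReal
    have hval : (∫ t in Set.Ioi (2 * r ^ 2), g t) = C / r ^ 2 * (ϱ ^ 2 / lam) := by
      rw [hrw, MeasureTheory.integral_const_mul]
      have : (∫ t in Set.Ioi (2 * r ^ 2), Real.exp (-b * t))
          = b⁻¹ * Real.exp (-(b * (2 * r ^ 2))) := by
        have hc : (∫ t in Set.Ioi (2 * r ^ 2), Real.exp (-(b * t)))
            = b⁻¹ • ∫ s in Set.Ioi (b * (2 * r ^ 2)), Real.exp (-s) :=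
          integral_comp_mul_left_Ioi (fun s => Real.exp (-s)) (2 * r ^ 2) hb
        simp only [neg_mul] at hc ⊢
        rw [hc, integral_exp_neg_Ioi, smul_eq_mul]
      rw [this]
      rw [Real.exp_neg]
      field_simp [hb_def]
      rw [hb_def]; field_simp
    rw [hval]
  -- combine
  have hsub : Set.Ioi (0:ℝ) ⊆
      (Set.Ioc 0 (d ^ 2) ∪ Set.Ioc (d ^ 2) (2 * r ^ 2)) ∪ Set.Ioi (2 * r ^ 2) := by
    intro t ht
    rcases le_or_gt t (d ^ 2) with h | h
    · exact Or.inl (Or.inl ⟨ht, h⟩)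
    rcases le_or_gt t (2 * r ^ 2) with h' | h'
    · exact Or.inl (Or.inr ⟨h, h'⟩)
    · exact Or.inr h'
  have hLnn : 0 ≤ Real.log (r / d) :=
    Real.log_nonneg ((one_le_div hd).mpr hdr)
  have hlog2 : Real.log (2 * r ^ 2 / d ^ 2) = Real.log 2 + 2 * Real.log (r / d) := by
    have : 2 * r ^ 2 / d ^ 2 = 2 * (r / d) ^ 2 := by
      field_simp
    rw [this, Real.log_mul (by norm_num) (by positivity), Real.log_pow]
    push_cast
    ring
  have hBnn : 0 ≤ C * Real.log (2 * r ^ 2 / d ^ 2) := by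
    rw [hlog2]
    have : (0:ℝ) < Real.log 2 := Real.log_pos (by norm_num)
    positivity
  calc (∫⁻ t in Set.Ioi (0:ℝ), ENNReal.ofReal |K x y t|)
      ≤ ∫⁻ t in (Set.Ioc 0 (d ^ 2) ∪ Set.Ioc (d ^ 2) (2 * r ^ 2)) ∪ Set.Ioi (2 * r ^ 2),
          ENNReal.ofReal |K x y t| := lintegral_mono_set hsub
    _ ≤ ((∫⁻ t in Set.Ioc 0 (d ^ 2), ENNReal.ofReal |K x y t|)
          + ∫⁻ t in Set.Ioc (d ^ 2) (2 * r ^ 2), ENNReal.ofReal |K x y t|)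
          + ∫⁻ t in Set.Ioi (2 * r ^ 2), ENNReal.ofReal |K x y t| :=
        le_trans (lintegral_union_le _ _ _) (add_le_add (lintegral_union_le _ _ _) le_rfl)
    _ ≤ (ENNReal.ofReal C + ENNReal.ofReal (C * Real.log (2 * r ^ 2 / d ^ 2)))
          + ENNReal.ofReal (C / r ^ 2 * (ϱ ^ 2 / lam)) :=
        add_le_add (add_le_add P1 P2) P3
    _ = ENNReal.ofReal (C + C * Real.log (2 * r ^ 2 / d ^ 2) + C / r ^ 2 * (ϱ ^ 2 / lam)) := by
        rw [← ENNReal.ofReal_add hC.le hBnn,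
          ← ENNReal.ofReal_add (add_nonneg hC.le hBnn) (by positivity)]
    _ ≤ ENNReal.ofReal ((2 * C + C * Real.log 2 + C / lam)
          * (1 + ϱ ^ 2 / r ^ 2 + Real.log (r / d))) := by
        apply ENNReal.ofReal_le_ofReal
        rw [hlog2]
        have hQ : 0 < ϱ ^ 2 / r ^ 2 := by positivity
        have hlog2pos : (0:ℝ) < Real.log 2 := Real.log_pos (by norm_num)
        have heq : C / r ^ 2 * (ϱ ^ 2 / lam) = C / lam * (ϱ ^ 2 / r ^ 2) := by
          field_simp
        rw [heq]
        nlinarith [mul_nonneg hC.le hLnn, mul_nonneg (mul_nonneg hC.le hlog2pos.le) hLnn,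
          mul_nonneg (mul_nonneg hC.le hlog2pos.le) hQ.le,
          mul_nonneg hC.le hQ.le, mul_nonneg (div_nonneg hC.le hlam.le) hLnn,
          div_pos hC hlam]
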